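/- Let X: X_0 →^{f_1} X_1 → ⋯ →^{f_n} X_n be a chain of finite G-sets of length n and K̄ an n-slice of the finite group G. For x ∈ X_0 let Ḡ^x denote the n-slice (G_x, G_{f_1(x)}, G_{f_2f_1(x)}, …, G_{f_n⋯f_1(x)}) of stabilizers (this is an n-slice since the maps are equivariant). Then φ_{K̄}(X) = Σ_{x ∈ [G\X_0]} m(K̄, Ḡ^x), where the sum is over a set of representatives of the G-orbits on X_0. -/

import Mathlib

variable {G : Type*}

/-- The mark `m(K̄,S̄) = |{gS₀ ∈ G/S₀ : g⁻¹Kᵢg ≤ Sᵢ for all i}|`. -/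
noncomputable def mark [Group G] {n : ℕ} (K S : Fin (n + 1) → Subgroup G) : ℕ :=
  Nat.card {x : G ⧸ S 0 //
    ∃ g : G, QuotientGroup.mk g = x ∧ ∀ i, ∀ k ∈ K i, g⁻¹ * k * g ∈ S i}

/-- Composite map `X₀ → Xᵢ` of a chain of `G`-sets. -/
def chainComp (X : ℕ → Type) (f : ∀ i, X i → X (i + 1)) : ∀ i, X 0 → X i
  | 0 => id
  | i + 1 => f i ∘ chainComp X f i

/-- The invariant set `Inv_{S̄}(X)`. -/
def sliceInv [Group G] {n : ℕ} (S : Fin (n + 1) → Subgroup G)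
    (X : ℕ → Type) [∀ i, MulAction G (X i)] (f : ∀ i, X i → X (i + 1)) :
    Set (X 0) :=
  {x | ∀ i : Fin (n + 1), ∀ s ∈ S i, s • chainComp X f i x = chainComp X f i x}

/-- `φ_{S̄}(X) = |Inv_{S̄}(X)|`. -/
noncomputable def phiSlice [Group G] {n : ℕ} (S : Fin (n + 1) → Subgroup G)
    (X : ℕ → Type) [∀ i, MulAction G (X i)] (f : ∀ i, X i → X (i + 1)) : ℕ :=
  Nat.card (sliceInv S X f)

private lemma chainComp_smul {G : Type*} [Group G] {X : ℕ → Type}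
    [∀ i, MulAction G (X i)] {f : ∀ i, X i → X (i + 1)}
    (hf : ∀ (i : ℕ) (g : G) (x : X i), f i (g • x) = g • f i x)
    (i : ℕ) (g : G) (x : X 0) :
    chainComp X f i (g • x) = g • chainComp X f i x := by
  induction i with
  | zero => rfl
  | succ i ih => simp [chainComp, ih, hf]

/-- `φ_{K̄}(X) = Σ_{x ∈ [G\X₀]} m(K̄, Ḡˣ)`, where `Ḡˣ` is the slice
of stabilizers of the images of an orbit representative `x` along the chain. -/
theorem phi_eq_sum_marks {n : ℕ} [Group G] [Finite G]
    (K : Fin (n + 1) → Subgroup G) (hK : Monotone K)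
    (X : ℕ → Type) [∀ i, Fintype (X i)] [∀ i, MulAction G (X i)]
    (f : ∀ i, X i → X (i + 1))
    (hf : ∀ (i : ℕ) (g : G) (x : X i), f i (g • x) = g • f i x)
    (R : Finset (X 0))
    (hR : ∀ x : X 0, ∃! r : X 0, r ∈ R ∧ r ∈ MulAction.orbit G x) :
    phiSlice K X f =
      ∑ r ∈ R, mark K (fun i : Fin (n + 1) =>
        MulAction.stabilizer G (chainComp X f i r)) := by
  classical
  set S : X 0 → Fin (n + 1) → Subgroup G := fun r i =>
    MulAction.stabilizer G (chainComp X f i r) with hS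
  -- orbit representative
  let rep : X 0 → X 0 := fun x => (hR x).choose
  have hrep1 : ∀ x, rep x ∈ R ∧ rep x ∈ MulAction.orbit G x :=
    fun x => (hR x).choose_spec.1
  have hrep2 : ∀ x r, r ∈ R → r ∈ MulAction.orbit G x → rep x = r := by
    intro x r h1 h2
    exact ((hR x).choose_spec.2 r ⟨h1, h2⟩).symm
  have hS0 : ∀ r : X 0, S r 0 = MulAction.stabilizer G r := by
    intro r
    simp only [hS]
    congr 1
  -- the invariant finset
  let Inv : Finset (X 0) := Finset.univ.filter (fun x => x ∈ sliceInv K X f)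
  have h1 : phiSlice K X f = Inv.card := by
    rw [phiSlice, Nat.card_eq_fintype_card]
    simp [Inv, Fintype.card_subtype, Set.mem_setOf_eq]
  have h2 : Inv.card = ∑ r ∈ R, (Inv.filter (fun x => rep x = r)).card := by
    apply Finset.card_eq_sum_card_fiberwise
    intro x _
    exact (hrep1 x).1
  rw [h1, h2]
  refine Finset.sum_congr rfl fun r hr => ?_
  -- per-orbit count
  have key : ∀ g : G, (∀ i, ∀ k ∈ K i, g⁻¹ * k * g ∈ S r i) →
      g • r ∈ Inv.filter (fun x => rep x = r) := by
    intro g hg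
    simp only [Inv, Finset.mem_filter, Finset.mem_univ, true_and]
    constructor
    · intro i k hk
      rw [chainComp_smul hf]
      have := hg i k hk
      simp only [hS, MulAction.mem_stabilizer_iff] at this
      have hmg : g * (g⁻¹ * k * g) = k * g := by group
      calc k • g • chainComp X f (i : ℕ) r
          = (k * g) • chainComp X f (i : ℕ) r := by rw [smul_smul]
        _ = g • (g⁻¹ * k * g) • chainComp X f (i : ℕ) r := by rw [smul_smul, hmg]
        _ = g • chainComp X f (i : ℕ) r := by rw [this]
    · apply hrep2 _ r hr
      rw [MulAction.orbit_smul]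
      exact MulAction.mem_orbit_self r
  have bij : Nat.card {x : G ⧸ S r 0 //
      ∃ g : G, QuotientGroup.mk g = x ∧ ∀ i, ∀ k ∈ K i, g⁻¹ * k * g ∈ S r i} =
      (Inv.filter (fun x => rep x = r)).card := by
    rw [← Nat.card_eq_finsetCard]
    refine Nat.card_eq_of_bijective
      (fun q => ⟨(q.2).choose • r, key _ (q.2).choose_spec.2⟩) ⟨?_, ?_⟩
    · rintro ⟨q₁, h₁⟩ ⟨q₂, h₂⟩ heq
      have hgr : h₁.choose • r = h₂.choose • r := congrArg Subtype.val heq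
      have hst : h₁.choose⁻¹ * h₂.choose ∈ MulAction.stabilizer G r := by
        rw [MulAction.mem_stabilizer_iff, mul_smul, ← hgr, inv_smul_smul]
      have hmem : h₁.choose⁻¹ * h₂.choose ∈ S r 0 := (hS0 r).ge hst
      ext
      show q₁ = q₂
      rw [← h₁.choose_spec.1, ← h₂.choose_spec.1]
      exact (QuotientGroup.eq.mpr hmem)
    · rintro ⟨x, hx⟩
      simp only [Inv, Finset.mem_filter, Finset.mem_univ, true_and] at hx
      obtain ⟨hxInv, hxrep⟩ := hx
      have hro : r ∈ MulAction.orbit G x := hxrep ▸ (hrep1 x).2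
      obtain ⟨g, hg⟩ := hro
      have hx' : x = g⁻¹ • r := by rw [← hg, inv_smul_smul]
      have hP : ∀ i, ∀ k ∈ K i, (g⁻¹)⁻¹ * k * g⁻¹ ∈ S r i := by
        intro i k hk
        simp only [hS, MulAction.mem_stabilizer_iff, inv_inv]
        have hfix : k • chainComp X f (i : ℕ) x = chainComp X f (i : ℕ) x :=
          hxInv i k hk
        have hcr : chainComp X f (i : ℕ) r = g • chainComp X f (i : ℕ) x := by
          rw [← hg, chainComp_smul hf]
        have hmg : g * k * g⁻¹ * g = g * k := by group
        rw [hcr, smul_smul, hmg, mul_smul, hfix]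
      refine ⟨⟨QuotientGroup.mk g⁻¹, g⁻¹, rfl, hP⟩, ?_⟩
      apply Subtype.ext
      show _ • r = x
      set q : {x : G ⧸ S r 0 //
        ∃ g : G, QuotientGroup.mk g = x ∧ ∀ i, ∀ k ∈ K i, g⁻¹ * k * g ∈ S r i} :=
        ⟨QuotientGroup.mk g⁻¹, g⁻¹, rfl, hP⟩ with hq
      have h1' := q.2.choose_spec.1
      have hmem : (g⁻¹)⁻¹ * q.2.choose ∈ S r 0 := QuotientGroup.eq.mp h1'.symm
      have this : ((g⁻¹)⁻¹ * q.2.choose) • r = r := (hS0 r).le hmem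
      calc q.2.choose • r = g⁻¹ • ((g⁻¹)⁻¹ * q.2.choose) • r := by
            rw [smul_smul, mul_inv_cancel_left]
        _ = g⁻¹ • r := by rw [this]
        _ = x := hx'.symm
  exact bij.symm
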